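/- Let n, d be positive integers, F a real n×d matrix with FᵀF invertible, y ∈ ℝⁿ, and θ̂ = (FᵀF)⁻¹Fᵀy. Let G be a real n×d matrix with GᵀG = (1/d)·I_d, let g₁ ∈ ℝⁿ be the first column of G, let z = ‖θ̂‖·g₁, and let c = √(1 + ‖θ̂‖²/d). Define the 2n×2d block-diagonal matrix F′ = (1/√2)·diag(F, G) and y′ = (1/c)·(y, z) ∈ ℝ²ⁿ. Then (F′)ᵀF′ is invertible and ((F′)ᵀF′)⁻¹(F′)ᵀ y′ = (√2/c)·(θ̂, ‖θ̂‖e₁) ∈ ℝ²ᵈ, where e₁ is the first standard basis vector of ℝ^d. In particular, the (d+1)-th entry of the best-fit parameters of the augmented problem equals (√2/c)‖θ̂‖ ≥ 0. -/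

import Mathlib

open Matrix

/-- Sign-fixing augmentation: with `θ̂ = (FᵀF)⁻¹Fᵀy`, `GᵀG = I_d/d`,
    `z = ‖θ̂‖·g₁` (`g₁` the first column of `G`), `c = √(1 + ‖θ̂‖²/d)`,
    `F′ = (1/√2)·diag(F, G)` and `y′ = (1/c)·(y, z)`, the matrix `(F′)ᵀF′`
    is invertible and `((F′)ᵀF′)⁻¹(F′)ᵀy′ = (√2/c)·(θ̂, ‖θ̂‖e₁)`; in
    particular its `(d+1)`-th entry is `(√2/c)‖θ̂‖ ≥ 0`. -/
theorem stmt17 (n d : ℕ) (hn : 0 < n) (hd : 0 < d)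
    (F G : Matrix (Fin n) (Fin d) ℝ)
    (hF : IsUnit (Fᵀ * F))
    (hG : Gᵀ * G = ((d : ℝ))⁻¹ • (1 : Matrix (Fin d) (Fin d) ℝ))
    (y : Fin n → ℝ) :
    let θ := (Fᵀ * F)⁻¹ *ᵥ (Fᵀ *ᵥ y)
    let t := ‖(show EuclideanSpace ℝ (Fin d) from WithLp.toLp 2 θ)‖
    let g₁ : Fin n → ℝ := fun i => G i ⟨0, hd⟩
    let z : Fin n → ℝ := t • g₁
    let c := Real.sqrt (1 + t ^ 2 / d)
    let F' : Matrix (Fin n ⊕ Fin n) (Fin d ⊕ Fin d) ℝ :=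
      (Real.sqrt 2)⁻¹ • Matrix.fromBlocks F 0 0 G
    let y' : Fin n ⊕ Fin n → ℝ := c⁻¹ • Sum.elim y z
    IsUnit (F'ᵀ * F') ∧
    (F'ᵀ * F')⁻¹ *ᵥ (F'ᵀ *ᵥ y') =
      (Real.sqrt 2 / c) •
        Sum.elim θ (fun j : Fin d => if j = ⟨0, hd⟩ then t else 0) ∧
    ((F'ᵀ * F')⁻¹ *ᵥ (F'ᵀ *ᵥ y')) (Sum.inr ⟨0, hd⟩) = Real.sqrt 2 / c * t ∧
    0 ≤ Real.sqrt 2 / c * t := by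
  intro θ t g₁ z c F' y'
  have hd' : (0:ℝ) < d := Nat.cast_pos.mpr hd
  have ht : 0 ≤ t := norm_nonneg _
  have hc : 0 < c := Real.sqrt_pos.mpr (by positivity)
  have hs2 : Real.sqrt 2 * Real.sqrt 2 = 2 := Real.mul_self_sqrt (by norm_num)
  have hs2pos : (0:ℝ) < Real.sqrt 2 := by positivity
  have h2 : (Real.sqrt 2)⁻¹ * (Real.sqrt 2)⁻¹ = (2:ℝ)⁻¹ := by
    rw [← mul_inv, hs2]
  set A := Fᵀ * F with hA
  have hAdet : IsUnit A.det := (Matrix.isUnit_iff_isUnit_det A).mp hF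
  have hAinv : A * A⁻¹ = 1 := Matrix.mul_nonsing_inv A hAdet
  have hFt : F'ᵀ = (Real.sqrt 2)⁻¹ • Matrix.fromBlocks Fᵀ 0 0 Gᵀ := by
    simp [F', Matrix.transpose_smul, Matrix.fromBlocks_transpose]
  have hF'def : F' = (Real.sqrt 2)⁻¹ • Matrix.fromBlocks F 0 0 G := rfl
  have hprod : F'ᵀ * F' = (2:ℝ)⁻¹ • Matrix.fromBlocks A 0 0 (((d:ℝ))⁻¹ • 1) := by
    rw [hFt, hF'def]
    rw [Matrix.smul_mul, Matrix.mul_smul, smul_smul, h2, Matrix.fromBlocks_multiply]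
    simp [hG, ← hA]
  have hinv : (F'ᵀ * F')⁻¹ = (2:ℝ) • Matrix.fromBlocks A⁻¹ 0 0 (((d:ℝ)) • 1) := by
    apply Matrix.inv_eq_right_inv
    rw [hprod, Matrix.smul_mul, Matrix.mul_smul, smul_smul, Matrix.fromBlocks_multiply]
    norm_num [hAinv, Matrix.smul_mul, Matrix.mul_smul, smul_smul,
      mul_inv_cancel₀ hd'.ne', inv_mul_cancel₀ hd'.ne', Matrix.fromBlocks_one]
  have hGz : Gᵀ *ᵥ z = fun j => t * (d:ℝ)⁻¹ * (if j = ⟨0, hd⟩ then 1 else 0) := by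
    funext j
    have h1 : (Gᵀ * G) j ⟨0, hd⟩ = (d:ℝ)⁻¹ * (if j = ⟨0, hd⟩ then 1 else 0) := by
      rw [hG]
      simp [Matrix.one_apply]
    have h2' : (Gᵀ *ᵥ g₁) j = (Gᵀ * G) j ⟨0, hd⟩ := by
      simp [Matrix.mulVec, Matrix.mul_apply, dotProduct, g₁]
    calc (Gᵀ *ᵥ z) j = t * (Gᵀ *ᵥ g₁) j := by
          simp [z, Matrix.mulVec_smul]
      _ = t * (d:ℝ)⁻¹ * (if j = ⟨0, hd⟩ then 1 else 0) := by rw [h2', h1]; ring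
  have hy' : F'ᵀ *ᵥ y' = ((Real.sqrt 2)⁻¹ * c⁻¹) •
      Sum.elim (Fᵀ *ᵥ y) (Gᵀ *ᵥ z) := by
    rw [hFt]
    show ((Real.sqrt 2)⁻¹ • Matrix.fromBlocks Fᵀ 0 0 Gᵀ) *ᵥ (c⁻¹ • Sum.elim y z) = _
    rw [Matrix.smul_mulVec, Matrix.mulVec_smul, smul_smul, Matrix.fromBlocks_mulVec]
    simp
  have hmain : (F'ᵀ * F')⁻¹ *ᵥ (F'ᵀ *ᵥ y') =
      (Real.sqrt 2 / c) •
        Sum.elim θ (fun j : Fin d => if j = ⟨0, hd⟩ then t else 0) := by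
    rw [hinv, hy', Matrix.mulVec_smul, Matrix.smul_mulVec, smul_smul,
      Matrix.fromBlocks_mulVec]
    have hcoef : (Real.sqrt 2)⁻¹ * c⁻¹ * 2 = Real.sqrt 2 / c := by
      rw [div_eq_mul_inv, ← hs2]
      field_simp
      rw [Real.sqrt_sq hs2pos.le]
    rw [hcoef]
    congr 1
    simp only [Sum.elim_comp_inl, Sum.elim_comp_inr, Matrix.zero_mulVec, add_zero, zero_add]
    funext x
    rcases x with i | j
    · rfl
    · show (((d:ℝ) • (1 : Matrix (Fin d) (Fin d) ℝ)) *ᵥ (Gᵀ *ᵥ z)) j = _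
      rw [Matrix.smul_mulVec, Matrix.one_mulVec, hGz]
      show (d:ℝ) • (t * (d:ℝ)⁻¹ * if j = ⟨0, hd⟩ then 1 else 0) = _
      by_cases hj : j = ⟨0, hd⟩ <;> simp [hj]
      field_simp
  refine ⟨?_, hmain, ?_, ?_⟩
  · rw [hprod]
    apply (Matrix.isUnit_iff_isUnit_det _).mpr
    rw [Matrix.det_smul, Matrix.det_fromBlocks_zero₂₁, Matrix.det_smul, Matrix.det_one]
    exact ((isUnit_iff_ne_zero.mpr (by positivity)).mul
      (hAdet.mul (isUnit_iff_ne_zero.mpr (by positivity))))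
  · rw [hmain]; simp
  · positivity
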